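/- Let T ⊆ ℝ³ be a nonempty bounded open connected set and let ℓ ≥ 1 be an integer. For every polynomial p in three variables of total degree at most ℓ − 1 there exists a unique vector field v ∈ P^ℓ(ℝ³)³ such that div v = p (as functions on ℝ³) and ∫_T v · (curl w) dx = 0 for every w ∈ P^{ℓ+1}(ℝ³)³. In other words, the divergence restricted to the L²(T)-orthogonal complement in P^ℓ(ℝ³)³ of the space {curl w : w ∈ P^{ℓ+1}(ℝ³)³} is a linear isomorphism onto P^{ℓ−1}(ℝ³). -/

import Mathlib

open MvPolynomial MeasureTheory

/-- The curl of a polynomial vector field on `ℝ³`, as a polynomial vector field. -/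
noncomputable def pcurl3 (w : Fin 3 → MvPolynomial (Fin 3) ℝ) : Fin 3 → MvPolynomial (Fin 3) ℝ :=
  ![pderiv 1 (w 2) - pderiv 2 (w 1),
    pderiv 2 (w 0) - pderiv 0 (w 2),
    pderiv 0 (w 1) - pderiv 1 (w 0)]

namespace DivCurlAux

noncomputable section

local notation "P3" => MvPolynomial (Fin 3) ℝ

lemma sumid_eq_degree (d : Fin 3 →₀ ℕ) : (d.sum fun _ e => e) = d.degree := rfl

lemma degree_eq_sum_univ (e : Fin 3 →₀ ℕ) : e.degree = ∑ j : Fin 3, e j :=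
  Finset.sum_subset (Finset.subset_univ _) (fun _ _ hx => Finsupp.notMem_support_iff.mp hx)

lemma degree_add_single (e : Fin 3 →₀ ℕ) (j : Fin 3) :
    (e + Finsupp.single j 1).degree = e.degree + 1 := by
  rw [degree_eq_sum_univ, degree_eq_sum_univ]
  simp [Finsupp.add_apply, Finsupp.single_apply, Finset.sum_add_distrib]

lemma coeff_pderiv (j : Fin 3) (e : Fin 3 →₀ ℕ) (q : P3) :
    coeff e (pderiv j q) = ((e j : ℝ) + 1) * coeff (e + Finsupp.single j 1) q := by
  induction q using MvPolynomial.induction_on' with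
  | add p q hp hq => simp [map_add, hp, hq, mul_add]
  | monomial d c =>
    rw [pderiv_monomial, coeff_monomial, coeff_monomial]
    by_cases hd : d = e + Finsupp.single j 1
    · subst hd
      have h1 : e + Finsupp.single j 1 - Finsupp.single j 1 = e := by simp
      rw [if_pos rfl, if_pos h1]
      simp [Finsupp.add_apply]
      ring
    · rw [if_neg hd]
      by_cases hde : d - Finsupp.single j 1 = e
      · have hdj : d j = 0 := by
          by_contra hdj
          apply hd
          rw [← hde, tsub_add_cancel_of_le]
          rwa [Finsupp.single_le_iff, Nat.one_le_iff_ne_zero]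
        simp [hde, hdj]
      · simp [hde]


lemma coeff_X_mul_pderiv (j : Fin 3) (e : Fin 3 →₀ ℕ) (q : P3) :
    coeff e (X j * pderiv j q) = (e j : ℝ) * coeff e q := by
  rw [mul_comm, coeff_mul_X']
  by_cases h : j ∈ e.support
  · rw [if_pos h, coeff_pderiv]
    have h1 : (e - Finsupp.single j 1 : Fin 3 →₀ ℕ) j = e j - 1 := by simp
    have h2 : e - Finsupp.single j 1 + Finsupp.single j 1 = e := by
      apply tsub_add_cancel_of_le
      rw [Finsupp.single_le_iff, Nat.one_le_iff_ne_zero]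
      exact Finsupp.mem_support_iff.mp h
    rw [h1, h2]
    have : 1 ≤ e j := Nat.one_le_iff_ne_zero.mpr (Finsupp.mem_support_iff.mp h)
    congr 1
    push_cast [Nat.cast_sub this]
    ring
  · rw [if_neg h]
    have : e j = 0 := Finsupp.notMem_support_iff.mp h
    simp [this]

lemma coeff_euler (e : Fin 3 →₀ ℕ) (q : P3) :
    coeff e (∑ j : Fin 3, X j * pderiv j q) = (e.degree : ℝ) * coeff e q := by
  rw [coeff_sum]
  simp only [coeff_X_mul_pderiv]
  rw [← Finset.sum_mul, degree_eq_sum_univ]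
  push_cast
  ring

/-- The inverse of `2 + Euler` on polynomials. -/
def phi (q : P3) : P3 :=
  ∑ d ∈ q.support, (((d.degree : ℝ) + 2)⁻¹) • (monomial d (coeff d q))

lemma coeff_phi (e : Fin 3 →₀ ℕ) (q : P3) :
    coeff e (phi q) = ((e.degree : ℝ) + 2)⁻¹ * coeff e q := by
  rw [phi, coeff_sum]
  simp only [coeff_smul, coeff_monomial, smul_eq_mul, mul_ite, mul_zero]
  rw [Finset.sum_ite_eq' q.support e (fun d => ((d.degree : ℝ) + 2)⁻¹ * coeff d q)]
  by_cases he : e ∈ q.support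
  · rw [if_pos he]
  · rw [if_neg he, MvPolynomial.notMem_support_iff.mp he, mul_zero]

lemma phi_key (q : P3) :
    phi q + phi q + ∑ j : Fin 3, X j * pderiv j (phi q) = q := by
  apply MvPolynomial.ext
  intro e
  rw [coeff_add, coeff_add, coeff_euler, coeff_phi]
  have h : ((e.degree : ℝ) + 2) ≠ 0 := by positivity
  field_simp
  ring

lemma phi_totalDegree_le (q : P3) : (phi q).totalDegree ≤ q.totalDegree := by
  refine (totalDegree_finset_sum _ _).trans (Finset.sup_le fun d hd => ?_)
  refine (totalDegree_smul_le _ _).trans ?_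
  refine (totalDegree_monomial_le _ _).trans ?_
  exact le_totalDegree hd

lemma pderiv_phi_div (v : Fin 3 → P3)
    (hdiv : ∑ j : Fin 3, pderiv j (v j) = 0) :
    ∑ j : Fin 3, pderiv j (phi (v j)) = 0 := by
  apply MvPolynomial.ext
  intro e
  have h0 : coeff e (∑ j : Fin 3, pderiv j (v j)) = 0 := by rw [hdiv]; simp
  rw [coeff_sum] at h0 ⊢
  simp only [coeff_pderiv, coeff_phi, degree_add_single] at h0 ⊢
  push_cast at h0 ⊢
  calc ∑ j : Fin 3, ((e j : ℝ) + 1) * (((e.degree : ℝ) + 1 + 2)⁻¹ * coeff (e + Finsupp.single j 1) (v j))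
      = ((e.degree : ℝ) + 1 + 2)⁻¹ * ∑ j : Fin 3, ((e j : ℝ) + 1) * coeff (e + Finsupp.single j 1) (v j) := by
        rw [Finset.mul_sum]; congr 1; ext j; ring
    _ = 0 := by rw [h0, mul_zero]

lemma pderiv_comm (i j : Fin 3) (q : P3) :
    pderiv i (pderiv j q) = pderiv j (pderiv i q) := by
  apply MvPolynomial.ext
  intro e
  simp only [coeff_pderiv, degree_add_single, Finsupp.add_apply, Finsupp.single_apply]
  rcases eq_or_ne i j with rfl | hij
  · ring
  · rw [if_neg hij, if_neg (Ne.symm hij)]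
    have : e + Finsupp.single i 1 + Finsupp.single j 1
        = e + Finsupp.single j 1 + Finsupp.single i 1 := by
      rw [add_assoc, add_assoc, add_comm (Finsupp.single i 1)]
    rw [this]
    push_cast
    ring

lemma totalDegree_pderiv_le (j : Fin 3) (q : P3) {n : ℕ} (hq : q.totalDegree ≤ n + 1) :
    (pderiv j q).totalDegree ≤ n := by
  apply Finset.sup_le
  intro d hd
  have hcd : coeff d (pderiv j q) ≠ 0 := MvPolynomial.mem_support_iff.mp hd
  rw [coeff_pderiv] at hcd
  have h2 : coeff (d + Finsupp.single j 1) q ≠ 0 := by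
    intro h; rw [h, mul_zero] at hcd; exact hcd rfl
  have h3 := le_totalDegree (MvPolynomial.mem_support_iff.mpr h2)
  rw [sumid_eq_degree, degree_add_single] at h3
  rw [sumid_eq_degree]
  omega

lemma exact3 (ℓ : ℕ) (v : Fin 3 → P3) (hdeg : ∀ i, (v i).totalDegree ≤ ℓ)
    (hdiv : pderiv 0 (v 0) + pderiv 1 (v 1) + pderiv 2 (v 2) = 0) :
    ∃ w : Fin 3 → P3, (∀ i, (w i).totalDegree ≤ ℓ + 1) ∧ ∀ i, pcurl3 w i = v i := by
  set u : Fin 3 → P3 := fun i => phi (v i) with hu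
  have hkey : ∀ i, u i + u i + (X 0 * pderiv 0 (u i) + X 1 * pderiv 1 (u i)
      + X 2 * pderiv 2 (u i)) = v i := by
    intro i
    have := phi_key (v i)
    rwa [Fin.sum_univ_three] at this
  have hdu : pderiv 0 (u 0) + pderiv 1 (u 1) + pderiv 2 (u 2) = 0 := by
    have := pderiv_phi_div v (by rwa [Fin.sum_univ_three])
    rwa [Fin.sum_univ_three] at this
  refine ⟨![u 1 * X 2 - u 2 * X 1, u 2 * X 0 - u 0 * X 2, u 0 * X 1 - u 1 * X 0], ?_, ?_⟩
  · have hdu' : ∀ i j : Fin 3, (u i * X j).totalDegree ≤ ℓ + 1 := by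
      intro i j
      refine (totalDegree_mul _ _).trans ?_
      have h4 : (u i).totalDegree ≤ ℓ := (phi_totalDegree_le (v i)).trans (hdeg i)
      rw [totalDegree_X]
      omega
    intro i
    fin_cases i <;>
      simpa using (totalDegree_sub _ _).trans (max_le (hdu' _ _) (hdu' _ _))
  · have hx : ∀ (i j : Fin 3), i ≠ j → pderiv i (X j : P3) = 0 := fun i j h =>
      pderiv_X_of_ne (Ne.symm h)
    have h0 : pcurl3 ![u 1 * X 2 - u 2 * X 1, u 2 * X 0 - u 0 * X 2, u 0 * X 1 - u 1 * X 0] 0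
        = v 0 := by
      simp only [pcurl3, Matrix.cons_val_zero, Matrix.cons_val_one, Matrix.head_cons,
        Matrix.cons_val_two, Matrix.tail_cons, map_sub, pderiv_mul, pderiv_X_self,
        hx 1 0 (by decide), hx 2 0 (by decide), hx 0 1 (by decide), hx 2 1 (by decide),
        hx 0 2 (by decide), hx 1 2 (by decide)]
      linear_combination hkey 0 - X 0 * hdu
    have h1 : pcurl3 ![u 1 * X 2 - u 2 * X 1, u 2 * X 0 - u 0 * X 2, u 0 * X 1 - u 1 * X 0] 1
        = v 1 := by
      simp only [pcurl3, Matrix.cons_val_zero, Matrix.cons_val_one, Matrix.head_cons,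
        Matrix.cons_val_two, Matrix.tail_cons, map_sub, pderiv_mul, pderiv_X_self,
        hx 1 0 (by decide), hx 2 0 (by decide), hx 0 1 (by decide), hx 2 1 (by decide),
        hx 0 2 (by decide), hx 1 2 (by decide)]
      linear_combination hkey 1 - X 1 * hdu
    have h2 : pcurl3 ![u 1 * X 2 - u 2 * X 1, u 2 * X 0 - u 0 * X 2, u 0 * X 1 - u 1 * X 0] 2
        = v 2 := by
      simp only [pcurl3, Matrix.cons_val_zero, Matrix.cons_val_one, Matrix.head_cons,
        Matrix.cons_val_two, Matrix.tail_cons, map_sub, pderiv_mul, pderiv_X_self,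
        hx 1 0 (by decide), hx 2 0 (by decide), hx 0 1 (by decide), hx 2 1 (by decide),
        hx 0 2 (by decide), hx 1 2 (by decide)]
      linear_combination hkey 2 - X 2 * hdu
    intro i
    fin_cases i
    · exact h0
    · exact h1
    · exact h2
/-- Antiderivative in the first variable. -/
def anti (p : P3) : P3 :=
  ∑ d ∈ p.support, monomial (d + Finsupp.single 0 1) (coeff d p / ((d 0 : ℝ) + 1))

lemma coeff_anti_add (e : Fin 3 →₀ ℕ) (p : P3) :
    coeff (e + Finsupp.single 0 1) (anti p) = coeff e p / ((e 0 : ℝ) + 1) := by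
  rw [anti, coeff_sum]
  have hinj : ∀ d : Fin 3 →₀ ℕ, d + Finsupp.single 0 1 = e + Finsupp.single 0 1 ↔ d = e := by
    intro d; constructor
    · intro h; exact add_right_cancel h
    · intro h; rw [h]
  simp only [coeff_monomial, hinj]
  rw [Finset.sum_ite_eq' p.support e (fun d => coeff d p / ((d 0 : ℝ) + 1))]
  by_cases he : e ∈ p.support
  · rw [if_pos he]
  · rw [if_neg he, MvPolynomial.notMem_support_iff.mp he, zero_div]

lemma pderiv_anti (p : P3) : pderiv 0 (anti p) = p := by
  apply MvPolynomial.ext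
  intro e
  rw [coeff_pderiv, coeff_anti_add]
  have h : ((e 0 : ℝ) + 1) ≠ 0 := by positivity
  field_simp

lemma totalDegree_anti_le (p : P3) : (anti p).totalDegree ≤ p.totalDegree + 1 := by
  refine (totalDegree_finset_sum _ _).trans (Finset.sup_le fun d hd => ?_)
  refine (totalDegree_monomial_le _ _).trans ?_
  have h1 := le_totalDegree hd
  rw [sumid_eq_degree] at h1
  have h2 : ((d + Finsupp.single 0 1).sum fun _ => id) = (d + Finsupp.single 0 1).degree := rfl
  rw [h2, degree_add_single]
  omega

lemma integrableOn_eval (T : Set (Fin 3 → ℝ)) (hbdd : Bornology.IsBounded T) (q : P3) :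
    IntegrableOn (fun x => eval x q) T (volume : Measure (Fin 3 → ℝ)) := by
  obtain ⟨R, hR⟩ := hbdd.subset_closedBall 0
  exact ((MvPolynomial.continuous_eval (p := q)).continuousOn.integrableOn_compact
    (isCompact_closedBall 0 R)).mono_set hR

lemma eq_zero_of_eval_eqOn_zero (q : P3) (T : Set (Fin 3 → ℝ)) (hT : IsOpen T)
    (hne : T.Nonempty) (h : ∀ x ∈ T, eval x q = 0) : q = 0 := by
  obtain ⟨x₀, hx₀⟩ := hne
  obtain ⟨r, hr, hball⟩ := Metric.isOpen_iff.mp hT x₀ hx₀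
  apply MvPolynomial.funext
  intro y
  rw [map_zero]
  set g : Fin 3 → Polynomial ℝ :=
    fun i => Polynomial.C (x₀ i) + Polynomial.C (y i - x₀ i) * Polynomial.X with hg
  set F : Polynomial ℝ := MvPolynomial.aeval g q with hF
  have hev : ∀ t : ℝ, Polynomial.eval t F = eval (x₀ + t • (y - x₀)) q := by
    intro t
    have h1 : (Polynomial.aeval t).comp (MvPolynomial.aeval g)
        = MvPolynomial.aeval (fun i => Polynomial.aeval t (g i)) := by
      apply MvPolynomial.comp_aeval
    have h2 : Polynomial.eval t F = (Polynomial.aeval t) (MvPolynomial.aeval g q) := by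
      rw [Polynomial.coe_aeval_eq_eval]
    have h3 : (fun i => Polynomial.aeval t (g i)) = fun i => x₀ i + t * (y i - x₀ i) := by
      funext i; simp [hg, mul_comm]
    rw [h2, ← AlgHom.comp_apply, h1, h3]
    have h4 : MvPolynomial.aeval (R := ℝ) (fun i => x₀ i + t * (y i - x₀ i)) q
        = eval (fun i => x₀ i + t * (y i - x₀ i)) q := by
      rw [← MvPolynomial.coe_aeval_eq_eval]; rfl
    rw [h4]
    congr 1
  set δ : ℝ := r / (‖y - x₀‖ + 1) with hδ
  have hδpos : 0 < δ := by positivity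
  have hroots : Set.Ioo (-δ) δ ⊆ {t : ℝ | Polynomial.IsRoot F t} := by
    intro t ht
    have hmem : x₀ + t • (y - x₀) ∈ Metric.ball x₀ r := by
      rw [Metric.mem_ball, dist_eq_norm, add_sub_cancel_left, norm_smul]
      have h5 : |t| < δ := abs_lt.mpr ⟨ht.1, ht.2⟩
      have h6 : ‖y - x₀‖ + 1 > 0 := by positivity
      calc ‖t‖ * ‖y - x₀‖ ≤ |t| * (‖y - x₀‖ + 1) := by
            rw [Real.norm_eq_abs]
            exact mul_le_mul_of_nonneg_left (by linarith) (abs_nonneg t)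
        _ < δ * (‖y - x₀‖ + 1) := by
            exact mul_lt_mul_of_pos_right h5 h6
        _ = r := by rw [hδ, div_mul_cancel₀ r h6.ne']
    have := h _ (hball hmem)
    simpa [Polynomial.IsRoot, hev t] using this
  have hFz : F = 0 := Polynomial.eq_zero_of_infinite_isRoot F
    ((Set.Ioo_infinite (by linarith)).mono hroots)
  have := hev 1
  rw [hFz] at this
  simp only [Polynomial.eval_zero, one_smul] at this
  rw [show x₀ + (y - x₀) = y by abel] at this
  exact this.symm

lemma components_zero_of_integral_sq_zero (T : Set (Fin 3 → ℝ)) (hopen : IsOpen T)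
    (hne : T.Nonempty) (hbdd : Bornology.IsBounded T) (u : Fin 3 → P3)
    (h : (∫ x in T, ∑ i, eval x (u i) * eval x (u i)) = 0) : ∀ i, u i = 0 := by
  set f : (Fin 3 → ℝ) → ℝ := fun x => ∑ i, eval x (u i) * eval x (u i) with hf
  have hfeval : f = fun x => eval x (∑ i, u i * u i) := by
    funext x; simp [hf, map_sum]
  have hfc : Continuous f := by
    rw [hfeval]; exact MvPolynomial.continuous_eval (p := ∑ i, u i * u i)
  have hint : IntegrableOn f T (volume : Measure (Fin 3 → ℝ)) := by
    rw [hfeval]; exact integrableOn_eval T hbdd _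
  have hnonneg : ∀ x, 0 ≤ f x := fun x => Finset.sum_nonneg fun i _ => mul_self_nonneg _
  have hzero : ∀ x ∈ T, f x = 0 := by
    by_contra hcon
    push_neg at hcon
    obtain ⟨x₀, hx₀T, hx₀⟩ := hcon
    have hpos : 0 < volume (Function.support f ∩ T) := by
      have hU : IsOpen (T ∩ f ⁻¹' {(0:ℝ)}ᶜ) :=
        hopen.inter (isOpen_compl_singleton.preimage hfc)
      have hUne : (T ∩ f ⁻¹' {(0:ℝ)}ᶜ).Nonempty := ⟨x₀, hx₀T, hx₀⟩
      refine lt_of_lt_of_le (hU.measure_pos volume hUne) (measure_mono ?_)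
      rintro x ⟨hx1, hx2⟩
      exact ⟨hx2, hx1⟩
    have := (setIntegral_pos_iff_support_of_nonneg_ae
      (Filter.Eventually.of_forall hnonneg : 0 ≤ᵐ[(volume : Measure (Fin 3 → ℝ)).restrict T] f)
      hint).mpr hpos
    exact this.ne' h
  intro i
  apply eq_zero_of_eval_eqOn_zero (u i) T hopen ⟨_, (hne.choose_spec : hne.choose ∈ T)⟩
  intro x hx
  have h0 := hzero x hx
  rw [hf] at h0
  have := (Finset.sum_eq_zero_iff_of_nonneg (fun j _ => mul_self_nonneg _)).mp h0 i
    (Finset.mem_univ i)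
  exact mul_self_eq_zero.mp this

end
end DivCurlAux

open DivCurlAux in
/-- On a nonempty bounded open connected `T ⊆ ℝ³` and for `ℓ ≥ 1`, for every
polynomial `p` of total degree `≤ ℓ − 1` there is a unique polynomial vector field
`v ∈ P^ℓ(ℝ³)³` such that `div v = p` as functions on `ℝ³` and `v` is `L²(T)`-orthogonal to
`curl w` for every `w ∈ P^{ℓ+1}(ℝ³)³`. -/
theorem div_iso_curl_orthogonal_complement (T : Set (Fin 3 → ℝ)) (hne : T.Nonempty)
    (hopen : IsOpen T) (hbdd : Bornology.IsBounded T) (hconn : IsConnected T)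
    (ℓ : ℕ) (hℓ : 1 ≤ ℓ)
    (p : MvPolynomial (Fin 3) ℝ) (hp : p.totalDegree ≤ ℓ - 1) :
    ∃! v : Fin 3 → MvPolynomial (Fin 3) ℝ,
      (∀ i, (v i).totalDegree ≤ ℓ) ∧
      (∀ x : Fin 3 → ℝ, (∑ i, eval x (pderiv i (v i))) = eval x p) ∧
      (∀ w : Fin 3 → MvPolynomial (Fin 3) ℝ, (∀ i, (w i).totalDegree ≤ ℓ + 1) →
        (∫ x in T, ∑ i, eval x (v i) * eval x (pcurl3 w i)) = 0) := by
  classical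
  -- degree bound for curls
  have hcurl_deg : ∀ (w : Fin 3 → MvPolynomial (Fin 3) ℝ), (∀ i, (w i).totalDegree ≤ ℓ + 1) →
      ∀ i, (pcurl3 w i).totalDegree ≤ ℓ := by
    intro w hw i
    have hb : ∀ (a b : Fin 3), (pderiv a (w b)).totalDegree ≤ ℓ :=
      fun a b => totalDegree_pderiv_le a (w b) (hw b)
    fin_cases i <;>
      exact (totalDegree_sub _ _).trans (max_le (hb _ _) (hb _ _))
  -- Uniqueness of solutions
  have huniq : ∀ v₁ v₂ : Fin 3 → MvPolynomial (Fin 3) ℝ,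
      ((∀ i, (v₁ i).totalDegree ≤ ℓ) ∧
        (∀ x : Fin 3 → ℝ, (∑ i, eval x (pderiv i (v₁ i))) = eval x p) ∧
        (∀ w : Fin 3 → MvPolynomial (Fin 3) ℝ, (∀ i, (w i).totalDegree ≤ ℓ + 1) →
          (∫ x in T, ∑ i, eval x (v₁ i) * eval x (pcurl3 w i)) = 0)) →
      ((∀ i, (v₂ i).totalDegree ≤ ℓ) ∧
        (∀ x : Fin 3 → ℝ, (∑ i, eval x (pderiv i (v₂ i))) = eval x p) ∧
        (∀ w : Fin 3 → MvPolynomial (Fin 3) ℝ, (∀ i, (w i).totalDegree ≤ ℓ + 1) →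
          (∫ x in T, ∑ i, eval x (v₂ i) * eval x (pcurl3 w i)) = 0)) →
      v₁ = v₂ := by
    intro v₁ v₂ ⟨hd1, he1, ho1⟩ ⟨hd2, he2, ho2⟩
    set u : Fin 3 → MvPolynomial (Fin 3) ℝ := fun i => v₁ i - v₂ i with hu
    have hudeg : ∀ i, (u i).totalDegree ≤ ℓ :=
      fun i => (totalDegree_sub _ _).trans (max_le (hd1 i) (hd2 i))
    have hudiv : pderiv 0 (u 0) + pderiv 1 (u 1) + pderiv 2 (u 2) = 0 := by
      apply MvPolynomial.funext
      intro x
      have h1 := he1 x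
      have h2 := he2 x
      rw [Fin.sum_univ_three] at h1 h2
      simp only [hu, map_sub, map_add, map_zero]
      linarith
    obtain ⟨w, hwdeg, hwc⟩ := exact3 ℓ u hudeg hudiv
    have hint1 : ∀ q : MvPolynomial (Fin 3) ℝ,
        IntegrableOn (fun x => eval x q) T (volume : Measure (Fin 3 → ℝ)) :=
      fun q => integrableOn_eval T hbdd q
    have key : (∫ x in T, ∑ i, eval x (u i) * eval x (u i)) = 0 := by
      have hfe : (fun x : Fin 3 → ℝ => ∑ i, eval x (u i) * eval x (u i))
          = (fun x => eval x (∑ i, v₁ i * pcurl3 w i) - eval x (∑ i, v₂ i * pcurl3 w i)) := by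
        funext x
        simp only [map_sum, map_mul]
        rw [← Finset.sum_sub_distrib]
        refine Finset.sum_congr rfl fun i _ => ?_
        have hcu : eval x (pcurl3 w i) = eval x (u i) := by rw [hwc i]
        have husub : eval x (u i) = eval x (v₁ i) - eval x (v₂ i) := by
          rw [show u i = v₁ i - v₂ i from rfl, map_sub]
        rw [hcu, husub]
        ring
      rw [hfe]
      rw [integral_sub (hint1 _) (hint1 _)]
      have h1 := ho1 w hwdeg
      have h2 := ho2 w hwdeg
      have e1 : (∫ x in T, eval x (∑ i, v₁ i * pcurl3 w i))
          = ∫ x in T, ∑ i, eval x (v₁ i) * eval x (pcurl3 w i) := by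
        congr 1; funext x; simp [map_sum, map_mul]
      have e2 : (∫ x in T, eval x (∑ i, v₂ i * pcurl3 w i))
          = ∫ x in T, ∑ i, eval x (v₂ i) * eval x (pcurl3 w i) := by
        congr 1; funext x; simp [map_sum, map_mul]
      rw [e1, e2, h1, h2, sub_zero]
    have hzero := components_zero_of_integral_sq_zero T hopen hne hbdd u key
    funext i
    have := hzero i
    rw [hu] at this
    exact sub_eq_zero.mp this
  -- Setup: finite-dimensional inner product space
  set E : Submodule ℝ (MvPolynomial (Fin 3) ℝ) := MvPolynomial.restrictTotalDegree (Fin 3) ℝ ℓ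
    with hE
  let V := Fin 3 → ↥E
  let D : V →ₗ[ℝ] MvPolynomial (Fin 3) ℝ :=
    { toFun := fun a => ∑ j : Fin 3, pderiv j ((a j : MvPolynomial (Fin 3) ℝ))
      map_add' := by
        intro a b
        rw [← Finset.sum_add_distrib]
        refine Finset.sum_congr rfl fun j _ => ?_
        have : ((a + b) j : MvPolynomial (Fin 3) ℝ) = (a j : MvPolynomial (Fin 3) ℝ)
            + (b j : MvPolynomial (Fin 3) ℝ) := rfl
        rw [this, map_add]
      map_smul' := by
        intro r a
        simp only [RingHom.id_apply]
        rw [Finset.smul_sum]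
        refine Finset.sum_congr rfl fun j _ => ?_
        have : ((r • a) j : MvPolynomial (Fin 3) ℝ) = r • (a j : MvPolynomial (Fin 3) ℝ) := rfl
        rw [this, MvPolynomial.smul_eq_C_mul, pderiv_C_mul, ← MvPolynomial.smul_eq_C_mul] }
  have hint1 : ∀ q : MvPolynomial (Fin 3) ℝ,
      IntegrableOn (fun x => eval x q) T (volume : Measure (Fin 3 → ℝ)) :=
    fun q => integrableOn_eval T hbdd q
  let c : InnerProductSpace.Core ℝ V :=
    { inner := fun a b => ∫ x in T,
        eval x (∑ i, ((a i : MvPolynomial (Fin 3) ℝ)) * ((b i : MvPolynomial (Fin 3) ℝ)))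
      conj_inner_symm := by
        intro a b
        simp only [starRingEnd_apply, star_trivial]
        congr 1
        funext x
        congr 1
        exact Finset.sum_congr rfl fun i _ => mul_comm _ _
      re_inner_nonneg := by
        intro a
        simp only [RCLike.re_to_real]
        apply integral_nonneg
        intro x
        simp only [Pi.zero_apply, map_sum]
        exact Finset.sum_nonneg fun i _ => by rw [map_mul]; exact mul_self_nonneg _
      add_left := by
        intro a b z
        have hpoly : (∑ i, (((a + b) i : MvPolynomial (Fin 3) ℝ)) * ((z i : MvPolynomial (Fin 3) ℝ)))
            = (∑ i, ((a i : MvPolynomial (Fin 3) ℝ)) * (z i : MvPolynomial (Fin 3) ℝ))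
              + (∑ i, ((b i : MvPolynomial (Fin 3) ℝ)) * (z i : MvPolynomial (Fin 3) ℝ)) := by
          rw [← Finset.sum_add_distrib]
          refine Finset.sum_congr rfl fun i _ => ?_
          have : (((a + b) i : MvPolynomial (Fin 3) ℝ)) = ((a i : MvPolynomial (Fin 3) ℝ))
              + ((b i : MvPolynomial (Fin 3) ℝ)) := rfl
          rw [this, add_mul]
        simp only [hpoly, map_add]
        exact integral_add (hint1 _) (hint1 _)
      smul_left := by
        intro a b r
        simp only [starRingEnd_apply, star_trivial]
        have hpoly : (∑ i, (((r • a) i : MvPolynomial (Fin 3) ℝ)) * ((b i : MvPolynomial (Fin 3) ℝ)))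
            = MvPolynomial.C r * ∑ i, ((a i : MvPolynomial (Fin 3) ℝ)) * (b i : MvPolynomial (Fin 3) ℝ) := by
          rw [Finset.mul_sum]
          refine Finset.sum_congr rfl fun i _ => ?_
          have : (((r • a) i : MvPolynomial (Fin 3) ℝ)) = r • ((a i : MvPolynomial (Fin 3) ℝ)) := rfl
          rw [this, MvPolynomial.smul_eq_C_mul]
          ring
        simp only [hpoly, map_mul, eval_C]
        exact integral_const_mul r _
      definite := by
        intro a ha
        have ha' : (∫ x in T, ∑ i, eval x ((a i : MvPolynomial (Fin 3) ℝ))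
            * eval x ((a i : MvPolynomial (Fin 3) ℝ))) = 0 := by
          rw [← ha]
          congr 1
          funext x
          simp [map_sum, map_mul]
        have := components_zero_of_integral_sq_zero T hopen hne hbdd _ ha'
        funext i
        exact Subtype.ext (this i)
    }
  letI : NormedAddCommGroup V := c.toNormedAddCommGroup
  letI : InnerProductSpace ℝ V := InnerProductSpace.ofCore c.toCore
  haveI : FiniteDimensional ℝ V := by infer_instance
  set K : Submodule ℝ V := LinearMap.ker D with hK
  haveI : Submodule.HasOrthogonalProjection K := by infer_instance
  -- the antiderivative element
  have hanti_mem : anti p ∈ E := by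
    rw [hE, MvPolynomial.mem_restrictTotalDegree]
    have := totalDegree_anti_le p
    omega
  let v₀ : V := ![⟨anti p, hanti_mem⟩, 0, 0]
  have hDv₀ : D v₀ = p := by
    show (∑ j : Fin 3, pderiv j ((v₀ j : MvPolynomial (Fin 3) ℝ))) = p
    rw [Fin.sum_univ_three]
    show pderiv 0 ((v₀ 0 : ↥E) : MvPolynomial (Fin 3) ℝ)
        + pderiv 1 ((v₀ 1 : ↥E) : MvPolynomial (Fin 3) ℝ)
        + pderiv 2 ((v₀ 2 : ↥E) : MvPolynomial (Fin 3) ℝ) = p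
    have h0 : (v₀ 0 : ↥E) = ⟨anti p, hanti_mem⟩ := rfl
    have h1 : (v₀ 1 : ↥E) = 0 := rfl
    have h2 : (v₀ 2 : ↥E) = 0 := rfl
    rw [h0, h1, h2]
    simp [pderiv_anti]
  obtain ⟨k, hkK, z, hzK, hsum⟩ := K.exists_add_mem_mem_orthogonal v₀
  have hDz : (∑ j : Fin 3, pderiv j ((z j : MvPolynomial (Fin 3) ℝ))) = p := by
    have : D z = D v₀ - D k := by
      rw [hsum]; rw [map_add]; ring
    rw [hDv₀, LinearMap.mem_ker.mp hkK, sub_zero] at this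
    exact this
  set vp : Fin 3 → MvPolynomial (Fin 3) ℝ := fun i => ((z i : MvPolynomial (Fin 3) ℝ)) with hvp
  have hprop : (∀ i, (vp i).totalDegree ≤ ℓ) ∧
      (∀ x : Fin 3 → ℝ, (∑ i, eval x (pderiv i (vp i))) = eval x p) ∧
      (∀ w : Fin 3 → MvPolynomial (Fin 3) ℝ, (∀ i, (w i).totalDegree ≤ ℓ + 1) →
        (∫ x in T, ∑ i, eval x (vp i) * eval x (pcurl3 w i)) = 0) := by
    refine ⟨?_, ?_, ?_⟩
    · intro i
      exact (MvPolynomial.mem_restrictTotalDegree _ _ _).mp (z i).2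
    · intro x
      rw [hvp, ← hDz, map_sum]
    · intro w hw
      let cv : V := fun i => ⟨pcurl3 w i, (MvPolynomial.mem_restrictTotalDegree _ _ _).mpr
        (hcurl_deg w hw i)⟩
      have hcvK : cv ∈ K := by
        rw [hK, LinearMap.mem_ker]
        show (∑ j : Fin 3, pderiv j ((cv j : MvPolynomial (Fin 3) ℝ))) = 0
        rw [Fin.sum_univ_three]
        show pderiv 0 (pcurl3 w 0) + pderiv 1 (pcurl3 w 1) + pderiv 2 (pcurl3 w 2) = 0
        simp only [pcurl3, Matrix.cons_val_zero, Matrix.cons_val_one, Matrix.head_cons,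
          Matrix.cons_val_two, Matrix.tail_cons, map_sub]
        linear_combination (pderiv_comm 0 1 (w 2)) + (pderiv_comm 1 2 (w 0))
          + (pderiv_comm 2 0 (w 1))
      have horth := (Submodule.mem_orthogonal K z).mp hzK cv hcvK
      have hzint : (∫ x in T, eval x (∑ i, ((cv i : MvPolynomial (Fin 3) ℝ))
          * ((z i : MvPolynomial (Fin 3) ℝ)))) = 0 := horth
      rw [← hzint]
      congr 1
      funext x
      rw [map_sum]
      refine Finset.sum_congr rfl fun i _ => ?_
      rw [map_mul]
      exact mul_comm _ _
  exact ⟨vp, hprop, fun y hy => huniq y vp hy hprop⟩
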